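/- arXiv:1808.09448 — 2 statements merged into one kernel-verified Lean document; each statement's English description precedes it below -/
import Mathlib

section
/- Let s ≥ 1. Suppose (q, p) and (q', p') are two solutions in ℝ^{2s} of the system ∑_{r=1}^s q_r p_r^{i-1} = a_i for i = 1,...,2s, where q_r, q'_r > 0 and both p₁ > p₂ > ... > p_s and p'₁ > p'₂ > ... > p'_s are strictly decreasing. Then (q, p) = (q', p'), i.e. q_r = q'_r and p_r = p'_r for all r. -/
open Finset Polynomial

/-- If a finitely supported signed combination of point masses at the points of a
finset `T` has vanishing moments of all orders `< n` with `T.card ≤ n`, then all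
coefficients vanish. -/
lemma vanishing_moments_zero {T : Finset ℝ} {c : ℝ → ℝ} {n : ℕ}
    (hcard : T.card ≤ n)
    (hmom : ∀ i < n, ∑ x ∈ T, c x * x ^ i = 0) :
    ∀ x ∈ T, c x = 0 := by
  intro x0 hx0
  set ℓ : ℝ[X] := ∏ y ∈ T.erase x0, (X - C y) with hℓ
  have hdeg : ℓ.natDegree < n := by
    have : ℓ.natDegree = (T.erase x0).card := by
      simpa [hℓ] using natDegree_prod_of_monic (T.erase x0) (fun y => X - C y)
        (fun y _ => monic_X_sub_C y)
    have h1 : 1 ≤ T.card := Finset.card_pos.mpr ⟨x0, hx0⟩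
    rw [this, Finset.card_erase_of_mem hx0]
    omega
  have heval : ∀ x : ℝ, ℓ.eval x = ∏ y ∈ T.erase x0, (x - y) := by
    intro x; simp [hℓ, eval_prod]
  -- the weighted sum of ℓ over T is zero
  have hzero : ∑ x ∈ T, c x * ℓ.eval x = 0 := by
    have : ∀ x : ℝ, ℓ.eval x = ∑ i ∈ Finset.range n, ℓ.coeff i * x ^ i := fun x =>
      eval_eq_sum_range' hdeg x
    calc ∑ x ∈ T, c x * ℓ.eval x
        = ∑ x ∈ T, ∑ i ∈ Finset.range n, ℓ.coeff i * (c x * x ^ i) := by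
          refine Finset.sum_congr rfl fun x _ => ?_
          rw [this x, Finset.mul_sum]
          exact Finset.sum_congr rfl fun i _ => by ring
      _ = ∑ i ∈ Finset.range n, ℓ.coeff i * ∑ x ∈ T, c x * x ^ i := by
          rw [Finset.sum_comm]; simp [Finset.mul_sum]
      _ = 0 := by
          refine Finset.sum_eq_zero fun i hi => ?_
          rw [hmom i (Finset.mem_range.mp hi), mul_zero]
  -- but the sum collapses to the term at x0
  have hcollapse : ∑ x ∈ T, c x * ℓ.eval x = c x0 * ℓ.eval x0 := by
    rw [← Finset.add_sum_erase _ _ hx0]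
    have : ∑ x ∈ T.erase x0, c x * ℓ.eval x = 0 := by
      refine Finset.sum_eq_zero fun x hx => ?_
      rw [heval x, Finset.prod_eq_zero hx (by ring), mul_zero]
    rw [this, add_zero]
  have hne : ℓ.eval x0 ≠ 0 := by
    rw [heval x0]
    refine Finset.prod_ne_zero_iff.mpr fun y hy => ?_
    have := Finset.ne_of_mem_erase hy
    intro hxy; exact this (by linarith)
  have := hzero ▸ hcollapse
  exact (mul_eq_zero.mp this.symm).resolve_right hne

/-- Two strictly antitone maps `Fin s → ℝ` with the same range are equal. -/
lemma strictAnti_eq_of_range_eq {s : ℕ} {p p' : Fin s → ℝ}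
    (hp : StrictAnti p) (hp' : StrictAnti p')
    (hrange : Set.range p = Set.range p') : p = p' := by
  set g : Fin s → ℝ := p ∘ Fin.rev with hg
  set g' : Fin s → ℝ := p' ∘ Fin.rev with hg'
  have hgm : StrictMono g := hp.comp (fun _ _ h => Fin.rev_lt_rev.mpr h)
  have hgm' : StrictMono g' := hp'.comp (fun _ _ h => Fin.rev_lt_rev.mpr h)
  set T : Finset ℝ := Finset.univ.image g with hT
  have hcard : T.card = s := by
    rw [hT, Finset.card_image_of_injective _ hgm.injective, Finset.card_univ, Fintype.card_fin]
  have hrg : Set.range g = Set.range g' := by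
    have h1 : Set.range g = Set.range p := Fin.rev_surjective.range_comp p
    have h2 : Set.range g' = Set.range p' := Fin.rev_surjective.range_comp p'
    rw [h1, h2, hrange]
  have hmem : ∀ x, g x ∈ T := fun x => Finset.mem_image_of_mem g (Finset.mem_univ x)
  have hmem' : ∀ x, g' x ∈ T := by
    intro x
    have : g' x ∈ Set.range g := hrg ▸ Set.mem_range_self x
    obtain ⟨y, hy⟩ := this
    exact hy ▸ hmem y
  have e1 : g = T.orderEmbOfFin hcard := Finset.orderEmbOfFin_unique hcard hmem hgm
  have e2 : g' = T.orderEmbOfFin hcard := Finset.orderEmbOfFin_unique hcard hmem' hgm'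
  have hgg : g = g' := e1.trans e2.symm
  funext i
  have := congrFun hgg i.rev
  simpa [hg, hg', Fin.rev_rev] using this

/-- Uniqueness of the solution of the Sylvester–Ramanujan power-sum system: if
(q,p) and (q',p') both satisfy ∑_r q_r p_r^{i-1} = a_i for i = 1,...,2s, with
positive weights and strictly decreasing nodes, then (q,p) = (q',p'). -/
theorem ramanujan_system_unique (s : ℕ) (hs : 1 ≤ s)
    (q p q' p' : Fin s → ℝ)
    (hq : ∀ r, 0 < q r) (hq' : ∀ r, 0 < q' r)
    (hp : StrictAnti p) (hp' : StrictAnti p')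
    (h : ∀ i : Fin (2 * s),
      ∑ r : Fin s, q r * p r ^ (i : ℕ) = ∑ r : Fin s, q' r * p' r ^ (i : ℕ)) :
    q = q' ∧ p = p' := by
  classical
  set T : Finset ℝ := Finset.univ.image p ∪ Finset.univ.image p' with hT
  set c : ℝ → ℝ := fun x =>
    (∑ r ∈ Finset.univ.filter (fun r => p r = x), q r) -
    (∑ r ∈ Finset.univ.filter (fun r => p' r = x), q' r) with hc
  have hcard : T.card ≤ 2 * s := by
    calc T.card ≤ (Finset.univ.image p).card + (Finset.univ.image p').card :=
          Finset.card_union_le _ _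
      _ ≤ s + s := by
          refine add_le_add (le_trans Finset.card_image_le ?_) (le_trans Finset.card_image_le ?_) <;> simp
      _ = 2 * s := by ring
  -- moments vanish
  have hmom : ∀ i < 2 * s, ∑ x ∈ T, c x * x ^ i = 0 := by
    intro i hi
    have key : ∀ (f : Fin s → ℝ) (w : Fin s → ℝ), (∀ r, f r ∈ T) →
        ∑ x ∈ T, (∑ r ∈ Finset.univ.filter (fun r => f r = x), w r) * x ^ i
          = ∑ r : Fin s, w r * f r ^ i := by
      intro f w hf
      rw [← Finset.sum_fiberwise_of_maps_to (fun r _ => hf r)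
        (fun r => w r * f r ^ i)]
      refine Finset.sum_congr rfl fun x _ => ?_
      rw [Finset.sum_mul]
      refine Finset.sum_congr rfl fun r hr => ?_
      rw [(Finset.mem_filter.mp hr).2]
    have hfT : ∀ r, p r ∈ T := fun r =>
      Finset.mem_union_left _ (Finset.mem_image_of_mem p (Finset.mem_univ r))
    have hfT' : ∀ r, p' r ∈ T := fun r =>
      Finset.mem_union_right _ (Finset.mem_image_of_mem p' (Finset.mem_univ r))
    have hh := h ⟨i, hi⟩
    simp only [hc, sub_mul, Finset.sum_sub_distrib, key p q hfT, key p' q' hfT']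
    simpa using sub_eq_zero_of_eq hh
  have hzero : ∀ x ∈ T, c x = 0 := vanishing_moments_zero hcard hmom
  -- single-point fibers for injective maps
  have hfib : ∀ (x : ℝ) (r : Fin s), p r = x →
      ∑ r' ∈ Finset.univ.filter (fun r' => p r' = x), q r' = q r := by
    intro x r hr
    have : Finset.univ.filter (fun r' => p r' = x) = {r} := by
      ext r'
      simp only [Finset.mem_filter, Finset.mem_univ, true_and, Finset.mem_singleton]
      constructor
      · intro hx; exact hp.injective (hx.trans hr.symm)
      · rintro rfl; exact hr
    rw [this, Finset.sum_singleton]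
  have hfib' : ∀ (x : ℝ) (r : Fin s), p' r = x →
      ∑ r' ∈ Finset.univ.filter (fun r' => p' r' = x), q' r' = q' r := by
    intro x r hr
    have : Finset.univ.filter (fun r' => p' r' = x) = {r} := by
      ext r'
      simp only [Finset.mem_filter, Finset.mem_univ, true_and, Finset.mem_singleton]
      constructor
      · intro hx; exact hp'.injective (hx.trans hr.symm)
      · rintro rfl; exact hr
    rw [this, Finset.sum_singleton]
  -- ranges coincide
  have hrange : Set.range p = Set.range p' := by
    apply Set.eq_of_subset_of_subset
    · rintro x ⟨r, rfl⟩
      have hz := hzero (p r) (Finset.mem_union_left _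
        (Finset.mem_image_of_mem p (Finset.mem_univ r)))
      simp only [hc] at hz
      rw [hfib (p r) r rfl] at hz
      have hpos : 0 < ∑ r' ∈ Finset.univ.filter (fun r' => p' r' = p r), q' r' := by
        have := hq r; linarith [sub_eq_zero.mp hz]
      have hne : (Finset.univ.filter (fun r' => p' r' = p r)).Nonempty := by
        by_contra hemp
        rw [Finset.not_nonempty_iff_eq_empty] at hemp
        rw [hemp, Finset.sum_empty] at hpos
        exact lt_irrefl 0 hpos
      obtain ⟨r', hr'⟩ := hne
      exact ⟨r', (Finset.mem_filter.mp hr').2⟩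
    · rintro x ⟨r, rfl⟩
      have hz := hzero (p' r) (Finset.mem_union_right _
        (Finset.mem_image_of_mem p' (Finset.mem_univ r)))
      simp only [hc] at hz
      rw [hfib' (p' r) r rfl] at hz
      have hpos : 0 < ∑ r' ∈ Finset.univ.filter (fun r' => p r' = p' r), q r' := by
        have := hq' r; linarith [sub_eq_zero.mp hz]
      have hne : (Finset.univ.filter (fun r' => p r' = p' r)).Nonempty := by
        by_contra hemp
        rw [Finset.not_nonempty_iff_eq_empty] at hemp
        rw [hemp, Finset.sum_empty] at hpos
        exact lt_irrefl 0 hpos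
      obtain ⟨r', hr'⟩ := hne
      exact ⟨r', (Finset.mem_filter.mp hr').2⟩
  have hpp : p = p' := strictAnti_eq_of_range_eq hp hp' hrange
  refine ⟨?_, hpp⟩
  funext r
  have hz := hzero (p r) (Finset.mem_union_left _
    (Finset.mem_image_of_mem p (Finset.mem_univ r)))
  simp only [hc] at hz
  rw [hfib (p r) r rfl, hfib' (p r) r (by rw [← hpp])] at hz
  linarith [sub_eq_zero.mp hz]
end

section
/- Let q ∈ ℝ^s be nonincreasing (q₁ ≥ q₂ ≥ ... ≥ q_s), let x ∈ ℝ^s be arbitrary, and let x* be the isotonic regression of x, i.e. the unique minimizer of ∑_{r=1}^s (y_r - x_r)² over all nonincreasing vectors y ∈ ℝ^s. Then ∑_{r=1}^s |x*_r - q_r|^α ≤ ∑_{r=1}^s |x_r - q_r|^α for every α ≥ 1. -/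
noncomputable def isoG (α t : ℝ) : ℝ := α * |t| ^ (α - 1) * Real.sign t

/-- Bernoulli-based convexity bound for positive base. -/
lemma iso_bern {α b a : ℝ} (hα : 1 ≤ α) (hb : 0 < b) (ha : 0 ≤ a) :
    b ^ α + α * b ^ (α - 1) * (a - b) ≤ a ^ α := by
  have hb' : b ≠ 0 := ne_of_gt hb
  have h1 : (-1 : ℝ) ≤ (a - b) / b := by
    rw [le_div_iff₀ hb]; linarith
  have h2 := one_add_mul_self_le_rpow_one_add h1 hα
  have h3 : 1 + (a - b) / b = a / b := by field_simp; ring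
  rw [h3] at h2
  have h4 : (a / b) ^ α = a ^ α / b ^ α := Real.div_rpow ha hb.le α
  rw [h4] at h2
  have hbα : 0 < b ^ α := Real.rpow_pos_of_pos hb α
  have h5 : (1 + α * ((a - b) / b)) * b ^ α ≤ a ^ α := by
    calc (1 + α * ((a - b) / b)) * b ^ α ≤ (a ^ α / b ^ α) * b ^ α := by
          apply mul_le_mul_of_nonneg_right h2 hbα.le
      _ = a ^ α := by field_simp
  have h6 : (1 + α * ((a - b) / b)) * b ^ α = b ^ α + α * b ^ (α - 1) * (a - b) := by
    have : b ^ (α - 1) = b ^ α / b := Real.rpow_sub_one hb' α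
    rw [this]; field_simp
  linarith [h6 ▸ h5]

/-- Subgradient inequality, positive-b case. -/
lemma iso_subgrad_pos {α b a : ℝ} (hα : 1 ≤ α) (hb : 0 < b) :
    |b| ^ α + α * |b| ^ (α - 1) * (a - b) ≤ |a| ^ α := by
  rw [abs_of_pos hb]
  have hcoef : 0 ≤ α * b ^ (α - 1) :=
    mul_nonneg (by linarith) (Real.rpow_nonneg hb.le _)
  have h1 : α * b ^ (α - 1) * (a - b) ≤ α * b ^ (α - 1) * (|a| - b) := by
    apply mul_le_mul_of_nonneg_left _ hcoef
    have := le_abs_self a; linarith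
  have h2 := iso_bern hα hb (abs_nonneg a)
  linarith

/-- Subgradient inequality for `t ↦ |t|^α`. -/
lemma iso_subgrad {α : ℝ} (hα : 1 ≤ α) (a b : ℝ) :
    |b| ^ α + isoG α b * (a - b) ≤ |a| ^ α := by
  rcases lt_trichotomy b 0 with hb | hb | hb
  · have h := iso_subgrad_pos (a := -a) hα (neg_pos.mpr hb)
    rw [abs_neg, abs_neg] at h
    have hsign : Real.sign b = -1 := Real.sign_of_neg hb
    unfold isoG
    rw [hsign]
    have : α * |b| ^ (α - 1) * -1 * (a - b) = α * |b| ^ (α - 1) * (-a - -b) := by ring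
    rw [this]
    exact h
  · subst hb
    have h0 : |(0:ℝ)| ^ α = 0 := by
      rw [abs_zero, Real.zero_rpow (by linarith)]
    unfold isoG
    rw [Real.sign_zero, h0]
    simpa using Real.rpow_nonneg (abs_nonneg a) α
  · have h := iso_subgrad_pos (a := a) hα hb
    have hsign : Real.sign b = 1 := Real.sign_of_pos hb
    unfold isoG
    rw [hsign, mul_one]
    exact h

/-- The subgradient is monotone. -/
lemma iso_mono {α : ℝ} (hα : 1 ≤ α) {t u : ℝ} (htu : t ≤ u) :
    isoG α t ≤ isoG α u := by
  have hα0 : (0:ℝ) ≤ α := by linarith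
  unfold isoG
  rcases lt_trichotomy u 0 with hu | hu | hu
  · have ht : t < 0 := lt_of_le_of_lt htu hu
    rw [Real.sign_of_neg hu, Real.sign_of_neg ht]
    have habs : |u| ≤ |t| := by
      rw [abs_of_neg hu, abs_of_neg ht]; linarith
    have h := Real.rpow_le_rpow (abs_nonneg u) habs (by linarith : (0:ℝ) ≤ α - 1)
    nlinarith [Real.rpow_nonneg (abs_nonneg u) (α - 1), Real.rpow_nonneg (abs_nonneg t) (α - 1)]
  · subst hu
    rw [Real.sign_zero, mul_zero]
    rcases lt_or_eq_of_le htu with ht | ht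
    · rw [Real.sign_of_neg ht]
      have : 0 ≤ α * |t| ^ (α - 1) := mul_nonneg hα0 (Real.rpow_nonneg (abs_nonneg t) _)
      nlinarith
    · subst ht; simp
  · rw [Real.sign_of_pos hu, mul_one]
    rcases le_or_gt t 0 with ht | ht
    · have h1 : α * |t| ^ (α - 1) * Real.sign t ≤ 0 := by
        rcases lt_or_eq_of_le ht with ht' | ht'
        · rw [Real.sign_of_neg ht']
          have : 0 ≤ α * |t| ^ (α - 1) := mul_nonneg hα0 (Real.rpow_nonneg (abs_nonneg t) _)
          nlinarith
        · subst ht'; simp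
      have h2 : 0 ≤ α * |u| ^ (α - 1) := mul_nonneg hα0 (Real.rpow_nonneg (abs_nonneg u) _)
      linarith
    · rw [Real.sign_of_pos ht, mul_one]
      have habs : |t| ≤ |u| := by rw [abs_of_pos ht, abs_of_pos hu]; linarith
      have h := Real.rpow_le_rpow (abs_nonneg t) habs (by linarith : (0:ℝ) ≤ α - 1)
      nlinarith

/-- Error reduction of isotonic regression: if x* is the ℓ² projection of x onto the
cone of nonincreasing vectors, and q is nonincreasing, then for every α ≥ 1,
∑ |x*_r - q_r|^α ≤ ∑ |x_r - q_r|^α. -/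
theorem isotonic_regression_error_reduction (s : ℕ) (hs : 1 ≤ s)
    (q x xstar : Fin s → ℝ) (hq : Antitone q)
    (hstar_mono : Antitone xstar)
    (hstar_min : ∀ y : Fin s → ℝ, Antitone y →
      ∑ r : Fin s, (xstar r - x r) ^ 2 ≤ ∑ r : Fin s, (y r - x r) ^ 2) :
    ∀ α : ℝ, 1 ≤ α →
      ∑ r : Fin s, |xstar r - q r| ^ α ≤ ∑ r : Fin s, |x r - q r| ^ α := by
  intro α hα
  classical
  -- variational inequality of the projection
  have key : ∀ y : Fin s → ℝ, Antitone y →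
      ∑ r : Fin s, (x r - xstar r) * (y r - xstar r) ≤ 0 := by
    intro y hy
    set A := ∑ r : Fin s, (x r - xstar r) * (y r - xstar r) with hA
    set D := ∑ r : Fin s, (y r - xstar r) ^ 2 with hD
    have hDnn : 0 ≤ D := Finset.sum_nonneg fun r _ => sq_nonneg _
    have hbound : ∀ t : ℝ, 0 < t → t ≤ 1 → A ≤ t * D / 2 := by
      intro t ht ht1
      have hzanti : Antitone (fun r => xstar r + t * (y r - xstar r)) := by
        intro r r' hrr'
        have h1 := hstar_mono hrr'
        have h2 := hy hrr'
        dsimp only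
        nlinarith
      have hmin := hstar_min _ hzanti
      have expand : ∑ r : Fin s, (xstar r + t * (y r - xstar r) - x r) ^ 2
          = (∑ r : Fin s, (xstar r - x r) ^ 2) + t ^ 2 * D - 2 * t * A := by
        rw [hA, hD, Finset.mul_sum, Finset.mul_sum, ← Finset.sum_add_distrib,
          ← Finset.sum_sub_distrib]
        apply Finset.sum_congr rfl
        intro r _
        ring
      rw [expand] at hmin
      nlinarith
    by_contra hcon
    push_neg at hcon
    rcases eq_or_lt_of_le hDnn with hD0 | hD0
    · have := hbound 1 one_pos le_rfl
      rw [← hD0] at this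
      linarith
    · have htpos : 0 < min 1 (A / D) := lt_min one_pos (div_pos hcon hD0)
      have hb := hbound _ htpos (min_le_left _ _)
      have h2 : min 1 (A / D) * D / 2 ≤ (A / D) * D / 2 := by
        have := mul_le_mul_of_nonneg_right (min_le_right 1 (A / D)) hD0.le
        linarith
      have h3 : (A / D) * D / 2 = A / 2 := by field_simp
      linarith
  -- prefix sums of the residual
  set Tr : ℕ → ℝ := fun k => ∑ r : Fin s, (if (r : ℕ) < k then x r - xstar r else 0) with hTr
  have hT_le : ∀ k : ℕ, Tr k ≤ 0 := by
    intro k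
    have hanti : Antitone (fun r : Fin s => xstar r + (if (r : ℕ) < k then (1:ℝ) else 0)) := by
      intro r r' hrr'
      have h0 := hstar_mono hrr'
      have hv : (r : ℕ) ≤ (r' : ℕ) := hrr'
      dsimp only
      rcases lt_or_ge (r' : ℕ) k with h1 | h1
      · rw [if_pos h1, if_pos (by omega : (r : ℕ) < k)]
        linarith
      · rw [if_neg (by omega : ¬ (r' : ℕ) < k)]
        split_ifs <;> linarith
    have h2 := key _ hanti
    have h3 : ∑ r : Fin s, (x r - xstar r) *
        ((xstar r + (if (r : ℕ) < k then (1:ℝ) else 0)) - xstar r) = Tr k := by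
      simp only [hTr]
      apply Finset.sum_congr rfl
      intro r _
      split_ifs <;> ring
    rw [h3] at h2
    exact h2
  have hTs : Tr s = 0 := by
    have h1 := hT_le s
    have hanti : Antitone (fun r : Fin s => xstar r - 1) := by
      intro r r' h
      have := hstar_mono h
      dsimp only
      linarith
    have h2 := key _ hanti
    have h4 : ∑ r : Fin s, (x r - xstar r) * ((xstar r - 1) - xstar r)
        = -∑ r : Fin s, (x r - xstar r) := by
      rw [← Finset.sum_neg_distrib]
      apply Finset.sum_congr rfl
      intro r _
      ring
    have h3 : Tr s = ∑ r : Fin s, (x r - xstar r) := by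
      simp only [hTr]
      apply Finset.sum_congr rfl
      intro r _
      rw [if_pos r.isLt]
    rw [h4] at h2
    rw [h3]
    linarith
  have hTdrop : ∀ (k : ℕ) (hk0 : k < s) (hk1 : k + 1 < s),
      xstar ⟨k+1, hk1⟩ < xstar ⟨k, hk0⟩ → Tr (k+1) = 0 := by
    intro k hk0 hk1 hlt
    set ε := xstar ⟨k, hk0⟩ - xstar ⟨k+1, hk1⟩ with hε_def
    have hε : 0 < ε := by rw [hε_def]; linarith
    have hanti : Antitone (fun r : Fin s => xstar r - (if (r : ℕ) < k+1 then ε else 0)) := by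
      intro r r' hrr'
      have h0 := hstar_mono hrr'
      have hv : (r : ℕ) ≤ (r' : ℕ) := hrr'
      dsimp only
      rcases lt_or_ge (r' : ℕ) (k+1) with h1 | h1
      · rw [if_pos h1, if_pos (by omega : (r : ℕ) < k+1)]
        linarith
      · rw [if_neg (by omega : ¬ (r' : ℕ) < k+1)]
        rcases lt_or_ge (r : ℕ) (k+1) with h2 | h2
        · rw [if_pos h2]
          have ha : r ≤ (⟨k, hk0⟩ : Fin s) := Fin.le_def.mpr (by simp; omega)
          have hb : (⟨k+1, hk1⟩ : Fin s) ≤ r' := Fin.le_def.mpr (by simp; omega)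
          have c1 := hstar_mono ha
          have c2 := hstar_mono hb
          rw [hε_def]
          linarith
        · rw [if_neg (by omega : ¬ (r : ℕ) < k+1)]
          linarith
    have h2 := key _ hanti
    have h3 : ∑ r : Fin s, (x r - xstar r) *
        ((xstar r - (if (r : ℕ) < k+1 then ε else 0)) - xstar r) = -(ε * Tr (k+1)) := by
      simp only [hTr]
      rw [Finset.mul_sum, ← Finset.sum_neg_distrib]
      apply Finset.sum_congr rfl
      intro r _
      split_ifs <;> ring
    rw [h3] at h2
    apply le_antisymm (hT_le _)
    nlinarith [hT_le (k+1)]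
  -- pointwise subgradient inequality
  have point : ∀ r : Fin s,
      |xstar r - q r| ^ α + isoG α (xstar r - q r) * (x r - xstar r) ≤ |x r - q r| ^ α := by
    intro r
    have h := iso_subgrad hα (x r - q r) (xstar r - q r)
    have heq : x r - q r - (xstar r - q r) = x r - xstar r := by ring
    rwa [heq] at h
  have hsum : (∑ r : Fin s, |xstar r - q r| ^ α)
      + ∑ r : Fin s, isoG α (xstar r - q r) * (x r - xstar r)
      ≤ ∑ r : Fin s, |x r - q r| ^ α := by
    rw [← Finset.sum_add_distrib]
    exact Finset.sum_le_sum fun r _ => point r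
  -- main nonnegativity via summation by parts
  have main : 0 ≤ ∑ r : Fin s, isoG α (xstar r - q r) * (x r - xstar r) := by
    set C : ℕ → ℝ := fun i => if h : i < s then x ⟨i, h⟩ - xstar ⟨i, h⟩ else 0 with hC
    set G : ℕ → ℝ := fun i =>
      isoG α (xstar ⟨min i (s-1), by omega⟩ - q ⟨min i (s-1), by omega⟩) with hG
    have hconv : ∀ m : ℕ, m ≤ s → ∑ i ∈ Finset.range m, C i = Tr m := by
      intro m hm
      simp only [hTr]
      have step1 : ∀ r : Fin s, (if (r : ℕ) < m then x r - xstar r else 0)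
          = (fun i : ℕ => if i < m then C i else 0) (r : ℕ) := by
        intro r
        dsimp only
        split_ifs with h1
        · simp only [hC]
          rw [dif_pos r.isLt]
        · rfl
      rw [Finset.sum_congr rfl (fun r _ => step1 r),
        Fin.sum_univ_eq_sum_range (fun i => if i < m then C i else 0) s,
        ← Finset.sum_filter]
      congr 1
      ext i
      simp only [Finset.mem_filter, Finset.mem_range]
      omega
    have hfin : ∑ r : Fin s, isoG α (xstar r - q r) * (x r - xstar r)
        = ∑ i ∈ Finset.range s, G i * C i := by
      have step1 : ∀ r : Fin s, isoG α (xstar r - q r) * (x r - xstar r)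
          = (fun i : ℕ => G i * C i) (r : ℕ) := by
        intro r
        dsimp only
        have hmk : ∀ (h : min (r : ℕ) (s-1) < s), (⟨min (r : ℕ) (s-1), h⟩ : Fin s) = r := by
          intro h
          apply Fin.ext
          have := r.isLt
          simp only
          omega
        simp only [hG, hC]
        rw [hmk, dif_pos r.isLt]
      rw [Finset.sum_congr rfl (fun r _ => step1 r),
        Fin.sum_univ_eq_sum_range (fun i => G i * C i) s]
    have habel := Finset.sum_range_by_parts G C s
    simp only [smul_eq_mul] at habel
    have hterms : ∑ i ∈ Finset.range (s-1),
        (G (i+1) - G i) * (∑ j ∈ Finset.range (i+1), C j) ≤ 0 := by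
      apply Finset.sum_nonpos
      intro i hi
      have his : i < s - 1 := Finset.mem_range.mp hi
      have hi1 : i + 1 < s := by omega
      have hi0 : i < s := by omega
      rw [hconv (i+1) (by omega)]
      have hmk1 : ∀ (h : min i (s-1) < s), (⟨min i (s-1), h⟩ : Fin s) = ⟨i, hi0⟩ := by
        intro h; apply Fin.ext; simp only; omega
      have hmk2 : ∀ (h : min (i+1) (s-1) < s), (⟨min (i+1) (s-1), h⟩ : Fin s) = ⟨i+1, hi1⟩ := by
        intro h; apply Fin.ext; simp only; omega
      have hGi : G i = isoG α (xstar ⟨i, hi0⟩ - q ⟨i, hi0⟩) := by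
        simp only [hG]; rw [hmk1]
      have hGi1 : G (i+1) = isoG α (xstar ⟨i+1, hi1⟩ - q ⟨i+1, hi1⟩) := by
        simp only [hG]; rw [hmk2]
      have hle : (⟨i, hi0⟩ : Fin s) ≤ ⟨i+1, hi1⟩ := Fin.le_def.mpr (by simp)
      rcases eq_or_lt_of_le (hstar_mono hle) with heq | hlt
      · have hqle := hq hle
        have hmono := iso_mono hα
          (show xstar ⟨i, hi0⟩ - q ⟨i, hi0⟩ ≤ xstar ⟨i+1, hi1⟩ - q ⟨i+1, hi1⟩ by linarith)
        have h1 : 0 ≤ G (i+1) - G i := by rw [hGi, hGi1]; linarith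
        exact mul_nonpos_of_nonneg_of_nonpos h1 (hT_le (i+1))
      · rw [hTdrop i hi0 hi1 hlt, mul_zero]
    rw [hfin, habel, hconv s le_rfl, hTs, mul_zero, zero_sub, neg_nonneg]
    exact hterms
  linarith
end
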